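/- Let d ≥ 1, let Σ be a positive semidefinite d×d real matrix, let θ₀ ∈ ℝ^d, σ ≥ 0, and ε ≥ 0. Then the function θ ↦ R_L(θ,ε) := ‖θ−θ₀‖²_Σ + σ² + ε²‖θ‖₂² + 2ε√(2/π)·‖θ‖₂·√(‖θ−θ₀‖²_Σ + σ²) is convex on ℝ^d. -/

import Mathlib

open MeasureTheory ProbabilityTheory Real Filter Matrix
open scoped RealInnerProductSpace BigOperators NNReal ENNReal Topology

noncomputable section

/-- The Σ-quadratic form `aᵀ Σ a`. -/
def quadForm {d : ℕ} (S : Matrix (Fin d) (Fin d) ℝ) (a : EuclideanSpace ℝ (Fin d)) : ℝ :=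
  ∑ i, ∑ j, a i * S i j * a j

/-- The population adversarial risk of the linear model `f_θ(x) = θᵀx` under squared loss
and `L2` attacks of strength `ε`, for `x ~ N(0,Σ)` and `y = θ₀ᵀx + w`, `w ~ N(0,σ²)`:
`R_L(θ,ε) = ‖θ−θ₀‖²_Σ + σ² + ε²‖θ‖₂² + 2ε√(2/π)‖θ‖₂√(‖θ−θ₀‖²_Σ + σ²)`. -/
def RL {d : ℕ} (S : Matrix (Fin d) (Fin d) ℝ) (θ0 : EuclideanSpace ℝ (Fin d))
    (σ ε : ℝ) (θ : EuclideanSpace ℝ (Fin d)) : ℝ :=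
  quadForm S (θ - θ0) + σ ^ 2 + ε ^ 2 * ‖θ‖ ^ 2 +
    2 * ε * Real.sqrt (2 / Real.pi) * ‖θ‖ * Real.sqrt (quadForm S (θ - θ0) + σ ^ 2)

/-- The quadratic form of `Bᴴ * B` is a sum of squares. -/
lemma quadForm_transpose_mul_self {d : ℕ} (B : Matrix (Fin d) (Fin d) ℝ)
    (a : EuclideanSpace ℝ (Fin d)) :
    quadForm (Bᴴ * B) a = ∑ k, (B.mulVec a k) ^ 2 := by
  calc quadForm (Bᴴ * B) a
      = ∑ i, ∑ j, ∑ k, a i * (B k i * B k j) * a j := by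
        simp only [quadForm, Matrix.mul_apply, Matrix.conjTranspose_apply, star_trivial,
          Finset.mul_sum, Finset.sum_mul]
    _ = ∑ i, ∑ k, ∑ j, a i * (B k i * B k j) * a j :=
        Finset.sum_congr rfl fun i _ => Finset.sum_comm
    _ = ∑ k, ∑ i, ∑ j, a i * (B k i * B k j) * a j := Finset.sum_comm
    _ = ∑ k, (B.mulVec a k) ^ 2 := by
        refine Finset.sum_congr rfl fun k _ => ?_
        simp only [Matrix.mulVec, dotProduct, sq, Finset.sum_mul_sum]
        exact Finset.sum_congr rfl fun i _ => Finset.sum_congr rfl fun j _ => by ring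

/-- `θ ↦ √(quadForm (BᴴB) (θ - θ0) + σ²)` is convex. -/
lemma convexOn_sqrtQ {d : ℕ} (B : Matrix (Fin d) (Fin d) ℝ)
    (θ0 : EuclideanSpace ℝ (Fin d)) (σ : ℝ) :
    ConvexOn ℝ Set.univ (fun θ : EuclideanSpace ℝ (Fin d) =>
      Real.sqrt (quadForm (Bᴴ * B) (θ - θ0) + σ ^ 2)) := by
  refine ⟨convex_univ, fun x _ y _ a b ha hb hab => ?_⟩
  set p := B.mulVec ((x - θ0 : EuclideanSpace ℝ (Fin d))) with hp
  set q := B.mulVec ((y - θ0 : EuclideanSpace ℝ (Fin d))) with hq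
  have hsplit : a • x + b • y - θ0 = a • (x - θ0) + b • (y - θ0) := by
    have h1 : (a + b) • θ0 = θ0 := by rw [hab, one_smul]
    rw [smul_sub, smul_sub]
    nth_rewrite 1 [← h1]
    rw [add_smul]; abel
  have hmid : ∀ k, B.mulVec ((a • x + b • y - θ0 : EuclideanSpace ℝ (Fin d))) k
      = a * p k + b * q k := by
    intro k
    rw [hsplit]
    simp only [Matrix.mulVec, dotProduct, hp, hq, PiLp.add_apply, PiLp.smul_apply,
      smul_eq_mul, Finset.mul_sum]
    rw [← Finset.sum_add_distrib]
    exact Finset.sum_congr rfl fun j _ => by ring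
  set P := ∑ k, p k ^ 2 with hP
  set Q2 := ∑ k, q k ^ 2 with hQ2
  set C := ∑ k, p k * q k with hC
  have hCS : C ^ 2 ≤ P * Q2 := Finset.sum_mul_sq_le_sq_mul_sq Finset.univ p q
  have hPpos : 0 ≤ P := Finset.sum_nonneg fun k _ => sq_nonneg _
  have hQpos : 0 ≤ Q2 := Finset.sum_nonneg fun k _ => sq_nonneg _
  have hsum_sub : P + Q2 - 2 * C = ∑ k, (p k - q k) ^ 2 := by
    have h : ∀ k ∈ Finset.univ, (p k - q k) ^ 2 = p k ^ 2 + q k ^ 2 - 2 * (p k * q k) :=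
      fun k _ => by ring
    rw [Finset.sum_congr rfl h, Finset.sum_sub_distrib, Finset.sum_add_distrib,
      ← Finset.mul_sum]
  have h2C : 2 * C ≤ P + Q2 := by
    nlinarith [Finset.sum_nonneg (fun k (_ : k ∈ Finset.univ) => sq_nonneg (p k - q k))]
  have hkey : (C + σ ^ 2) ^ 2 ≤ (P + σ ^ 2) * (Q2 + σ ^ 2) := by nlinarith [sq_nonneg σ]
  set u := Real.sqrt (P + σ ^ 2) with hu
  set v := Real.sqrt (Q2 + σ ^ 2) with hv
  have hu2 : u ^ 2 = P + σ ^ 2 := Real.sq_sqrt (by positivity)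
  have hv2 : v ^ 2 = Q2 + σ ^ 2 := Real.sq_sqrt (by positivity)
  have hu0 : 0 ≤ u := Real.sqrt_nonneg _
  have hv0 : 0 ≤ v := Real.sqrt_nonneg _
  have hCuv : C + σ ^ 2 ≤ u * v := by
    calc C + σ ^ 2 ≤ |C + σ ^ 2| := le_abs_self _
      _ = Real.sqrt ((C + σ ^ 2) ^ 2) := (Real.sqrt_sq_eq_abs _).symm
      _ ≤ Real.sqrt ((P + σ ^ 2) * (Q2 + σ ^ 2)) := Real.sqrt_le_sqrt hkey
      _ = u * v := Real.sqrt_mul (by positivity) _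
  have hexp : quadForm (Bᴴ * B) (a • x + b • y - θ0) + σ ^ 2
      = a ^ 2 * P + 2 * (a * b) * C + b ^ 2 * Q2 + σ ^ 2 := by
    rw [quadForm_transpose_mul_self]
    have h : ∀ k ∈ Finset.univ, (B.mulVec ((a • x + b • y - θ0 : EuclideanSpace ℝ (Fin d))) k) ^ 2
        = a ^ 2 * p k ^ 2 + 2 * (a * b) * (p k * q k) + b ^ 2 * q k ^ 2 := by
      intro k _; rw [hmid k]; ring
    rw [Finset.sum_congr rfl h, Finset.sum_add_distrib, Finset.sum_add_distrib,
      ← Finset.mul_sum, ← Finset.mul_sum, ← Finset.mul_sum]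
  have hprod : 0 ≤ a * b * (u * v - (C + σ ^ 2)) :=
    mul_nonneg (mul_nonneg ha hb) (by linarith)
  have hle : a ^ 2 * P + 2 * (a * b) * C + b ^ 2 * Q2 + σ ^ 2 ≤ (a * u + b * v) ^ 2 := by
    have key : (a * u + b * v) ^ 2 - (a ^ 2 * P + 2 * (a * b) * C + b ^ 2 * Q2 + σ ^ 2)
        = 2 * (a * b * (u * v - (C + σ ^ 2))) := by
      linear_combination a ^ 2 * hu2 + b ^ 2 * hv2 + σ ^ 2 * (a + b + 1) * hab
    linarith [hprod, key]
  have hux : Real.sqrt (quadForm (Bᴴ * B) (x - θ0) + σ ^ 2) = u := by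
    rw [quadForm_transpose_mul_self, ← hp, ← hP]
  have hvy : Real.sqrt (quadForm (Bᴴ * B) (y - θ0) + σ ^ 2) = v := by
    rw [quadForm_transpose_mul_self, ← hq, ← hQ2]
  have habv : 0 ≤ a * u + b * v :=
    add_nonneg (mul_nonneg ha hu0) (mul_nonneg hb hv0)
  simp only [smul_eq_mul]
  rw [hexp, hux, hvy]
  calc Real.sqrt (a ^ 2 * P + 2 * (a * b) * C + b ^ 2 * Q2 + σ ^ 2)
      ≤ Real.sqrt ((a * u + b * v) ^ 2) := Real.sqrt_le_sqrt hle
    _ = a * u + b * v := Real.sqrt_sq habv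

/-- The square of a nonnegative convex function is convex. -/
lemma convexOn_sq_of_nonneg {E : Type*} [AddCommGroup E] [Module ℝ E]
    {f : E → ℝ} (hf : ConvexOn ℝ Set.univ f) (h0 : ∀ x, 0 ≤ f x) :
    ConvexOn ℝ Set.univ (fun x => f x ^ 2) := by
  refine ⟨convex_univ, fun x _ y _ a b ha hb hab => ?_⟩
  have h1 := hf.2 (Set.mem_univ x) (Set.mem_univ y) ha hb hab
  simp only [smul_eq_mul] at h1 ⊢
  have hmid0 : 0 ≤ f (a • x + b • y) := h0 _
  have h2 : f (a • x + b • y) ^ 2 ≤ (a * f x + b * f y) ^ 2 := by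
    have hr : 0 ≤ a * f x + b * f y :=
      add_nonneg (mul_nonneg ha (h0 x)) (mul_nonneg hb (h0 y))
    nlinarith
  have h3 : (a * f x + b * f y) ^ 2 ≤ a * f x ^ 2 + b * f y ^ 2 := by
    nlinarith [mul_nonneg ha hb, sq_nonneg (f x - f y)]
  linarith

/-- For positive semidefinite `Σ`, `σ ≥ 0` and `ε ≥ 0`, the adversarial risk
`θ ↦ R_L(θ,ε)` is convex on `ℝ^d`. -/
theorem adversarial_risk_convex
    {d : ℕ} (hd : 1 ≤ d) (S : Matrix (Fin d) (Fin d) ℝ) (hS : S.PosSemidef)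
    (θ0 : EuclideanSpace ℝ (Fin d)) (σ ε : ℝ) (hσ : 0 ≤ σ) (hε : 0 ≤ ε) :
    ConvexOn ℝ Set.univ (RL S θ0 σ ε) := by
  obtain ⟨B, hB⟩ : ∃ B : Matrix (Fin d) (Fin d) ℝ, S = Bᴴ * B := by
    open MatrixOrder Matrix.Norms.L2Operator in
    exact CStarAlgebra.nonneg_iff_eq_star_mul_self.mp hS.nonneg
  subst hB
  set β := Real.sqrt (2 / Real.pi) with hβ
  have hβ0 : 0 ≤ β := Real.sqrt_nonneg _
  have hβ1 : β ≤ 1 := by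
    rw [hβ, show (1 : ℝ) = Real.sqrt 1 by simp]
    exact Real.sqrt_le_sqrt (div_le_one_of_le₀ Real.two_le_pi Real.pi_pos.le)
  -- the three convex building blocks
  have hg : ConvexOn ℝ Set.univ (fun θ : EuclideanSpace ℝ (Fin d) =>
      Real.sqrt (quadForm (Bᴴ * B) (θ - θ0) + σ ^ 2)) := convexOn_sqrtQ B θ0 σ
  have hg0 : ∀ θ : EuclideanSpace ℝ (Fin d),
      0 ≤ Real.sqrt (quadForm (Bᴴ * B) (θ - θ0) + σ ^ 2) := fun θ => Real.sqrt_nonneg _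
  have hg2 : ConvexOn ℝ Set.univ (fun θ : EuclideanSpace ℝ (Fin d) =>
      Real.sqrt (quadForm (Bᴴ * B) (θ - θ0) + σ ^ 2) ^ 2) := convexOn_sq_of_nonneg hg hg0
  have hnorm : ConvexOn ℝ Set.univ (fun θ : EuclideanSpace ℝ (Fin d) => ‖θ‖) :=
    convexOn_univ_norm
  have hnorm2 : ConvexOn ℝ Set.univ (fun θ : EuclideanSpace ℝ (Fin d) => ‖θ‖ ^ 2) :=
    convexOn_sq_of_nonneg hnorm fun θ => norm_nonneg θ
  have hh : ConvexOn ℝ Set.univ (fun θ : EuclideanSpace ℝ (Fin d) =>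
      ε * ‖θ‖ + Real.sqrt (quadForm (Bᴴ * B) (θ - θ0) + σ ^ 2)) := by
    have := (hnorm.smul hε).add hg
    simpa [smul_eq_mul, Pi.add_def] using this
  have hh2 : ConvexOn ℝ Set.univ (fun θ : EuclideanSpace ℝ (Fin d) =>
      (ε * ‖θ‖ + Real.sqrt (quadForm (Bᴴ * B) (θ - θ0) + σ ^ 2)) ^ 2) :=
    convexOn_sq_of_nonneg hh fun θ =>
      add_nonneg (mul_nonneg hε (norm_nonneg _)) (Real.sqrt_nonneg _)
  have h1β : (0 : ℝ) ≤ 1 - β := by linarith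
  have hcomb : ConvexOn ℝ Set.univ (fun θ : EuclideanSpace ℝ (Fin d) =>
      (1 - β) * (Real.sqrt (quadForm (Bᴴ * B) (θ - θ0) + σ ^ 2) ^ 2) +
      ((1 - β) * ε ^ 2) * ‖θ‖ ^ 2 +
      β * (ε * ‖θ‖ + Real.sqrt (quadForm (Bᴴ * B) (θ - θ0) + σ ^ 2)) ^ 2) := by
    have := ((hg2.smul h1β).add (hnorm2.smul (mul_nonneg h1β (sq_nonneg ε)))).add
      (hh2.smul hβ0)
    simpa [smul_eq_mul, add_assoc, Pi.add_def] using this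
  have heq : RL (Bᴴ * B) θ0 σ ε = fun θ : EuclideanSpace ℝ (Fin d) =>
      (1 - β) * (Real.sqrt (quadForm (Bᴴ * B) (θ - θ0) + σ ^ 2) ^ 2) +
      ((1 - β) * ε ^ 2) * ‖θ‖ ^ 2 +
      β * (ε * ‖θ‖ + Real.sqrt (quadForm (Bᴴ * B) (θ - θ0) + σ ^ 2)) ^ 2 := by
    funext θ
    have hq0 : 0 ≤ quadForm (Bᴴ * B) (θ - θ0) := by
      rw [quadForm_transpose_mul_self]; positivity
    have hs2 : Real.sqrt (quadForm (Bᴴ * B) (θ - θ0) + σ ^ 2) ^ 2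
        = quadForm (Bᴴ * B) (θ - θ0) + σ ^ 2 := Real.sq_sqrt (by positivity)
    simp only [RL, ← hβ]
    linear_combination -hs2
  rw [heq]
  exact hcomb
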